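/- Let U ⊆ ℂⁿ be open, f, s holomorphic on U with f/s holomorphic, φ : U → [-∞,∞) measurable, and 0 < ε < 2. If ∫_U |f|²·|s|^{-2(1-ε/2)}·e^{-2(1+ε)φ} dλ < ∞ and ∫_V |f|²·|s|^{-α} dλ < ∞ on some V ⋐ U for α = (10ε+ε²)/(3ε) < 4, then ∫_V |f|²·|s|^{-2}·e^{-2(1+ε/4)φ} dλ < ∞. -/

import Mathlib

open MeasureTheory ENNReal Real

lemma young_aux (ε : ℝ) (hε0 : 0 < ε) (a t c : ℝ) (ha : 0 ≤ a) (ht : 0 ≤ t) :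
    a ^ 2 * t ^ (-(2:ℝ)) * exp (-2 * (1 + ε / 4) * c) ≤
    a ^ 2 * t ^ (-(2 * (1 - ε / 2))) * exp (-2 * (1 + ε) * c) +
    a ^ 2 * t ^ (-((10 * ε + ε ^ 2) / (3 * ε))) := by
  have hε1 : (0:ℝ) < 1 + ε := by linarith
  set w1 : ℝ := (1 + ε / 4) / (1 + ε) with hw1def
  set w2 : ℝ := (3 * ε / 4) / (1 + ε) with hw2def
  have hw1 : 0 < w1 := by positivity
  have hw2 : 0 < w2 := by positivity
  have hw : w1 + w2 = 1 := by
    rw [hw1def, hw2def, ← add_div, div_eq_one_iff_eq hε1.ne']; ring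
  set e1 : ℝ := -(2 * (1 - ε / 2)) with he1def
  set e2 : ℝ := -((10 * ε + ε ^ 2) / (3 * ε)) with he2def
  set A : ℝ := a ^ 2 * t ^ e1 * exp (-2 * (1 + ε) * c) with hAdef
  set B : ℝ := a ^ 2 * t ^ e2 with hBdef
  have hA : 0 ≤ A := by positivity
  have hB : 0 ≤ B := by positivity
  have key : a ^ 2 * t ^ (-(2:ℝ)) * exp (-2 * (1 + ε / 4) * c) = A ^ w1 * B ^ w2 := by
    have hexpA : A ^ w1 = a ^ (2 * w1) * t ^ (e1 * w1) * exp (-2 * (1 + ε) * c * w1) := by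
      rw [hAdef, Real.mul_rpow (by positivity) (exp_nonneg _),
        Real.mul_rpow (by positivity) (by positivity), ← Real.exp_mul,
        ← Real.rpow_natCast a 2, ← Real.rpow_mul ha, ← Real.rpow_mul ht]
      norm_num
    have hexpB : B ^ w2 = a ^ (2 * w2) * t ^ (e2 * w2) := by
      rw [hBdef, Real.mul_rpow (by positivity) (by positivity),
        ← Real.rpow_natCast a 2, ← Real.rpow_mul ha, ← Real.rpow_mul ht]
      norm_num
    rw [hexpA, hexpB]
    have h2w : 2 * w1 + 2 * w2 = 2 := by nlinarith [hw]
    have het : e1 * w1 + e2 * w2 = -2 := by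
      rw [he1def, he2def, hw1def, hw2def]
      field_simp
      ring
    have hc : -2 * (1 + ε) * c * w1 = -2 * (1 + ε / 4) * c := by
      rw [hw1def]; field_simp
    have haa : a ^ (2 * w1) * a ^ (2 * w2) = a ^ 2 := by
      rw [← Real.rpow_add' ha (by rw [h2w]; norm_num), h2w, ← Real.rpow_natCast a 2]
      norm_num
    have htt : t ^ (e1 * w1) * t ^ (e2 * w2) = t ^ (-(2:ℝ)) := by
      rw [← Real.rpow_add' ht (by rw [het]; norm_num), het]
    calc a ^ 2 * t ^ (-(2:ℝ)) * exp (-2 * (1 + ε / 4) * c)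
        = (a ^ (2 * w1) * a ^ (2 * w2)) * (t ^ (e1 * w1) * t ^ (e2 * w2)) *
            exp (-2 * (1 + ε) * c * w1) := by rw [haa, htt, hc]
      _ = a ^ (2 * w1) * t ^ (e1 * w1) * exp (-2 * (1 + ε) * c * w1) *
            (a ^ (2 * w2) * t ^ (e2 * w2)) := by ring
  rw [key]
  calc A ^ w1 * B ^ w2 ≤ w1 * A + w2 * B :=
        Real.geom_mean_le_arith_mean2_weighted hw1.le hw2.le hA hB hw
    _ ≤ 1 * A + 1 * B := by
        gcongr
        · rw [hw1def]; rw [div_le_one hε1]; linarith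
        · rw [hw2def]; rw [div_le_one hε1]; linarith
    _ = A + B := by ring

/-- The Hölder interpolation (1.7) in the proof of Lemma 4.1 (iii): for
`f, s` holomorphic on open `U ⊆ ℂⁿ` with `f/s` holomorphic, `φ` measurable,
`0 < ε < 2` and `α = (10ε+ε²)/(3ε) < 4`: if
`∫_U |f|²|s|^{-2(1-ε/2)}e^{-2(1+ε)φ} < ∞` and `∫_V |f|²|s|^{-α} < ∞` on some
relatively compact open `V ⋐ U`, then `∫_V |f|²|s|^{-2}e^{-2(1+ε/4)φ} < ∞`. -/
theorem stmt12 (n : ℕ) (U : Set (Fin n → ℂ)) (hU : IsOpen U)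
    (f s : (Fin n → ℂ) → ℂ) (φ : (Fin n → ℂ) → ℝ)
    (hf : DifferentiableOn ℂ f U) (hs : DifferentiableOn ℂ s U)
    (hφ : Measurable φ)
    (hdiv : ∃ g : (Fin n → ℂ) → ℂ, DifferentiableOn ℂ g U ∧
      ∀ x ∈ U, f x = s x * g x)
    (ε : ℝ) (hε0 : 0 < ε) (hε2 : ε < 2)
    (V : Set (Fin n → ℂ)) (hV : IsOpen V) (hVU : closure V ⊆ U)
    (hVc : IsCompact (closure V))
    (h1 : ∫⁻ x in U,
        ENNReal.ofReal (‖f x‖ ^ 2 * ‖s x‖ ^ (-(2 * (1 - ε / 2))) *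
          exp (-2 * (1 + ε) * φ x)) < ⊤)
    (h2 : ∫⁻ x in V,
        ENNReal.ofReal (‖f x‖ ^ 2 * ‖s x‖ ^ (-((10 * ε + ε ^ 2) / (3 * ε)))) < ⊤) :
    ∫⁻ x in V,
        ENNReal.ofReal (‖f x‖ ^ 2 * ‖s x‖ ^ (-(2 : ℝ)) *
          exp (-2 * (1 + ε / 4) * φ x)) < ⊤ := by
  have hVsub : V ⊆ U := subset_closure.trans hVU
  -- AEMeasurability of the first integrand on V
  have hfm : AEMeasurable (fun x => ‖f x‖) (volume.restrict V) :=
    ((hf.continuousOn.mono hVsub).norm.aemeasurable hV.measurableSet)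
  have hsm : AEMeasurable (fun x => ‖s x‖) (volume.restrict V) :=
    ((hs.continuousOn.mono hVsub).norm.aemeasurable hV.measurableSet)
  have hAmeas : AEMeasurable (fun x =>
      ENNReal.ofReal (‖f x‖ ^ 2 * ‖s x‖ ^ (-(2 * (1 - ε / 2))) *
        exp (-2 * (1 + ε) * φ x))) (volume.restrict V) := by
    apply AEMeasurable.ennreal_ofReal
    exact ((hfm.pow_const 2).mul (hsm.pow_const _)).mul
      (((hφ.const_mul _).exp).aemeasurable)
  calc ∫⁻ x in V, ENNReal.ofReal (‖f x‖ ^ 2 * ‖s x‖ ^ (-(2 : ℝ)) *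
          exp (-2 * (1 + ε / 4) * φ x))
      ≤ ∫⁻ x in V, (ENNReal.ofReal (‖f x‖ ^ 2 * ‖s x‖ ^ (-(2 * (1 - ε / 2))) *
          exp (-2 * (1 + ε) * φ x)) +
        ENNReal.ofReal (‖f x‖ ^ 2 * ‖s x‖ ^ (-((10 * ε + ε ^ 2) / (3 * ε))))) := by
        apply lintegral_mono
        intro x
        simp only []
        rw [← ENNReal.ofReal_add (by positivity) (by positivity)]
        exact ENNReal.ofReal_le_ofReal
          (young_aux ε hε0 (‖f x‖) (‖s x‖) (φ x) (norm_nonneg _) (norm_nonneg _))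
    _ = (∫⁻ x in V, ENNReal.ofReal (‖f x‖ ^ 2 * ‖s x‖ ^ (-(2 * (1 - ε / 2))) *
          exp (-2 * (1 + ε) * φ x))) +
        ∫⁻ x in V, ENNReal.ofReal (‖f x‖ ^ 2 * ‖s x‖ ^ (-((10 * ε + ε ^ 2) / (3 * ε)))) :=
        lintegral_add_left' hAmeas _
    _ ≤ (∫⁻ x in U, ENNReal.ofReal (‖f x‖ ^ 2 * ‖s x‖ ^ (-(2 * (1 - ε / 2))) *
          exp (-2 * (1 + ε) * φ x))) +
        ∫⁻ x in V, ENNReal.ofReal (‖f x‖ ^ 2 * ‖s x‖ ^ (-((10 * ε + ε ^ 2) / (3 * ε)))) := by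
        gcongr
    _ < ⊤ := ENNReal.add_lt_top.2 ⟨h1, h2⟩
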